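/- Suppose the real polynomial q(x,y) = q₀(x) + q₁(x)y + q₂(x)y² + q₃(x)y³ + ... + qₙ(x)yⁿ has degree n ≥ 4 in y with qₙ ≢ 0, and a polynomial r(x,y) = r₀(x) + r₁(x)y (degree ≤ 1 in y) satisfies qₓ(r − y r_y) + (y q_y − q) rₓ + y² r_{xx} − 2yq r_{xy} + q² r_{yy} = 0 identically. If moreover qₓ(0,0) = 1, then r₁ is constant, r₀ = 0; hence r(x,y) = −c·y for some constant c. -/

import Mathlib

open Polynomial

theorem newton_degree_ge_four_commuting_trivial
    (n : ℕ) (hn : 4 ≤ n) (qc : ℕ → Polynomial ℝ) (hqn : qc n ≠ 0)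
    (r₀ r₁ : Polynomial ℝ) :
    let q : ℝ → ℝ → ℝ := fun x y => ∑ i ∈ Finset.range (n + 1), (qc i).eval x * y ^ i
    let r : ℝ → ℝ → ℝ := fun x y => r₀.eval x + r₁.eval x * y
    (deriv (fun t => q t 0) 0 = 1) →
    (∀ x y : ℝ,
      deriv (fun t => q t y) x * (r x y - y * deriv (fun t => r x t) y) +
        (y * deriv (fun t => q x t) y - q x y) * deriv (fun t => r t y) x +
        y ^ 2 * deriv (fun t => deriv (fun u => r u y) t) x -
        2 * y * q x y * deriv (fun t => deriv (fun u => r u t) x) y +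
        q x y ^ 2 * deriv (fun t => deriv (fun u => r x u) t) y = 0) →
    ∃ c : ℝ, r₁ = C (-c) ∧ r₀ = 0 ∧ ∀ x y : ℝ, r x y = -c * y := by
  intro q r h1 h2
  obtain ⟨m, rfl⟩ : ∃ m, n = m + 4 := ⟨n - 4, by omega⟩
  set n := m + 4 with hn4
  -- the y-polynomial of q at fixed x
  set P : ℝ → Polynomial ℝ := fun x => ∑ i ∈ Finset.range (n+1), C ((qc i).eval x) * X ^ i
    with hP
  -- basic deriv computations
  have hq_eval : ∀ x y : ℝ, q x y = (P x).eval y := by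
    intro x y; simp [hP, q, eval_finset_sum, hn4]
  have hL1 : ∀ x y : ℝ, deriv (fun t => q t y) x
      = ∑ i ∈ Finset.range (n+1), (derivative (qc i)).eval x * y ^ i := by
    intro x y
    have h : (fun t => q t y)
        = fun t => (∑ i ∈ Finset.range (n+1), qc i * C (y ^ i)).eval t := by
      funext t; simp [q, eval_finset_sum, hn4]
    rw [h, Polynomial.deriv]
    simp [derivative_sum, derivative_mul, derivative_pow, eval_finset_sum]
  have hL2 : ∀ x y : ℝ, deriv (fun t => q x t) y = (derivative (P x)).eval y := by
    intro x y
    have h : (fun t => q x t) = fun t => (P x).eval t := by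
      funext t; simp [hq_eval]
    rw [h, Polynomial.deriv]
  have hL3 : ∀ x y : ℝ, deriv (fun t => r t y) x
      = (derivative r₀).eval x + (derivative r₁).eval x * y := by
    intro x y
    have h : (fun t => r t y) = fun t => (r₀ + r₁ * C y).eval t := by
      funext t; simp [r]
    rw [h, Polynomial.deriv]; simp
  have haffine : ∀ a b y : ℝ, deriv (fun t => a + b * t) y = b := by
    intro a b y
    have h : (fun t : ℝ => a + b * t) = fun t => (C a + C b * X : Polynomial ℝ).eval t := by
      funext t; simp
    rw [h, Polynomial.deriv]; simp
  have hL4 : ∀ x y : ℝ, deriv (fun t => r x t) y = r₁.eval x := by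
    intro x y; exact haffine _ _ y
  have hL5 : ∀ x y : ℝ, deriv (fun t => deriv (fun u => r u y) t) x
      = (derivative (derivative r₀)).eval x + (derivative (derivative r₁)).eval x * y := by
    intro x y
    have h : (fun t => deriv (fun u => r u y) t)
        = fun t => (derivative (r₀ + r₁ * C y)).eval t := by
      funext t
      have h2 : (fun u => r u y) = fun u => (r₀ + r₁ * C y).eval u := by
        funext u; simp [r]
      rw [h2, Polynomial.deriv]
    rw [h, Polynomial.deriv]; simp
  have hL6 : ∀ x y : ℝ, deriv (fun t => deriv (fun u => r u t) x) y
      = (derivative r₁).eval x := by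
    intro x y
    have h : (fun t => deriv (fun u => r u t) x)
        = fun t => (derivative r₀).eval x + (derivative r₁).eval x * t := by
      funext t; rw [hL3 x t]
    rw [h]; exact haffine _ _ y
  have hL7 : ∀ x y : ℝ, deriv (fun t => deriv (fun u => r x u) t) y = 0 := by
    intro x y
    have h : (fun t => deriv (fun u => r x u) t) = fun _ => r₁.eval x := by
      funext t; exact hL4 x t
    rw [h]; simp
  -- pointwise identity
  have hpt : ∀ x y : ℝ,
      (∑ i ∈ Finset.range (n+1), (derivative (qc i)).eval x * y ^ i) * (r₀.eval x)
      + (y * (derivative (P x)).eval y - (P x).eval y)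
          * ((derivative r₀).eval x + (derivative r₁).eval x * y)
      + y ^ 2 * ((derivative (derivative r₀)).eval x
          + (derivative (derivative r₁)).eval x * y)
      - 2 * y * ((P x).eval y) * ((derivative r₁).eval x) = 0 := by
    intro x y
    have h := h2 x y
    rw [hL1, hL2, hL3, hL4, hL5, hL6, hL7, hq_eval] at h
    have hr : r x y = r₀.eval x + r₁.eval x * y := rfl
    rw [hr] at h
    linear_combination h
  -- the full polynomial identity in y
  set F : ℝ → Polynomial ℝ := fun x =>
    (∑ i ∈ Finset.range (n+1), C ((derivative (qc i)).eval x) * X ^ i) * C (r₀.eval x)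
    + (X * derivative (P x)) * C ((derivative r₀).eval x)
    + ((X * derivative (P x)) * C ((derivative r₁).eval x)) * X
    - (P x) * C ((derivative r₀).eval x)
    - ((P x) * C ((derivative r₁).eval x)) * X
    + C ((derivative (derivative r₀)).eval x) * X ^ 2
    + C ((derivative (derivative r₁)).eval x) * X ^ 3
    - (C (2 * (derivative r₁).eval x) * (P x)) * X
    with hF
  have hF0 : ∀ x : ℝ, F x = 0 := by
    intro x
    apply Polynomial.funext
    intro y
    have h := hpt x y
    simp only [hF, eval_add, eval_sub, eval_mul, eval_pow, eval_C, eval_X, eval_finset_sum,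
      eval_zero]
    linear_combination h
  -- coefficient facts for P
  have hcP : ∀ x : ℝ, ∀ k, (P x).coeff k = if k < n + 1 then (qc k).eval x else 0 := by
    intro x k
    simp only [hP, finset_sum_coeff, coeff_C_mul, coeff_X_pow, mul_ite, mul_one, mul_zero]
    rw [Finset.sum_ite_eq (Finset.range (n+1)) k (fun i => (qc i).eval x)]
    simp [Finset.mem_range]
  have hcP' : ∀ x : ℝ, ∀ k,
      (∑ i ∈ Finset.range (n+1), C ((derivative (qc i)).eval x) * X ^ i).coeff k
      = if k < n + 1 then (derivative (qc k)).eval x else 0 := by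
    intro x k
    simp only [finset_sum_coeff, coeff_C_mul, coeff_X_pow, mul_ite, mul_one, mul_zero]
    rw [Finset.sum_ite_eq (Finset.range (n+1)) k (fun i => (derivative (qc i)).eval x)]
    simp [Finset.mem_range]
  -- coefficient n+1 : (n-3) * qc n * r₁' = 0
  have hA : ∀ x : ℝ, ((m:ℝ)+1) * (qc n).eval x * (derivative r₁).eval x = 0 := by
    intro x
    have h := congrArg (fun p => p.coeff (m+5)) (hF0 x)
    simp only [hF, coeff_add, coeff_sub, coeff_mul_C, coeff_mul_X, coeff_X_mul,
      coeff_derivative, coeff_C_mul, coeff_X_pow, coeff_zero, hcP, hcP', hn4] at h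
    norm_num at h
    push_cast at h
    simp only [hn4]
    linarith [h]
  -- derivative r₁ = 0
  have hr1d : derivative r₁ = 0 := by
    have hz : C ((m:ℝ)+1) * qc n * derivative r₁ = 0 := by
      apply Polynomial.funext
      intro x
      simpa using hA x
    have h1' : (C ((m:ℝ)+1) : Polynomial ℝ) ≠ 0 := by
      simp only [ne_eq, C_eq_zero]
      positivity
    rcases mul_eq_zero.mp hz with h | h
    · rcases mul_eq_zero.mp h with h | h
      · exact absurd h h1'
      · exact absurd h hqn
    · exact h
  -- coefficient n : qc n ' * r₀ + (n-1) qc n * r₀' = 0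
  have hB : derivative (qc n) * r₀ + C ((m:ℝ)+3) * (qc n * derivative r₀) = 0 := by
    apply Polynomial.funext
    intro x
    have h := congrArg (fun p => p.coeff (m+4)) (hF0 x)
    simp only [hF, coeff_add, coeff_sub, coeff_mul_C, coeff_mul_X, coeff_X_mul,
      coeff_derivative, coeff_C_mul, coeff_X_pow, coeff_zero, hcP, hcP', hr1d, hn4] at h
    norm_num at h
    push_cast at h
    simp only [eval_add, eval_mul, eval_C, eval_zero, hn4]
    linarith [h]
  -- coefficient 0 (from y = 0) : qc 0 ' * r₀ - qc 0 * r₀' = 0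
  have hC0 : derivative (qc 0) * r₀ - qc 0 * derivative r₀ = 0 := by
    apply Polynomial.funext
    intro x
    have h := hpt x 0
    have hv : (P x).eval 0 = (qc 0).eval x := by
      have := hcP x 0
      rwa [Polynomial.coeff_zero_eq_eval_zero, if_pos (by omega)] at this
    have hsum : (∑ i ∈ Finset.range (n+1), (derivative (qc i)).eval x * (0:ℝ) ^ i)
        = (derivative (qc 0)).eval x := by
      rw [Finset.sum_eq_single 0]
      · simp
      · intro i _ hi; simp [zero_pow hi]
      · intro hi; simp at hi
    rw [hsum, hv] at h
    simp only [eval_sub, eval_mul, eval_zero]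
    linear_combination h
  -- qc 0 ' (0) = 1
  have hq0 : (derivative (qc 0)).eval 0 = 1 := by
    have hfe : (fun t => q t 0) = fun t => (qc 0).eval t := by
      funext t
      show (∑ i ∈ Finset.range (n+1), (qc i).eval t * (0:ℝ) ^ i) = (qc 0).eval t
      rw [Finset.sum_eq_single 0]
      · simp
      · intro i _ hi; simp [zero_pow hi]
      · intro hi; simp at hi
    rwa [hfe, Polynomial.deriv] at h1
  -- r₁ is a constant
  have hr1 : r₁ = C (r₁.coeff 0) := eq_C_of_derivative_eq_zero hr1d
  -- r₀ = 0
  have hr0 : r₀ = 0 := by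
    by_contra hr0
    by_cases hdr : derivative r₀ = 0
    · -- r₀ constant nonzero : from hC0, derivative (qc 0) = 0, contradicting hq0
      rw [hdr, mul_zero, sub_zero] at hC0
      rcases mul_eq_zero.mp hC0 with h | h
      · rw [h] at hq0; simp at hq0
      · exact hr0 h
    · by_cases hdq : derivative (qc n) = 0
      · rw [hdq, zero_mul, zero_add] at hB
        rcases mul_eq_zero.mp hB with h | h
        · simp only [C_eq_zero] at h
          have hm : (0:ℝ) ≤ (m:ℝ) := Nat.cast_nonneg m
          linarith
        · rcases mul_eq_zero.mp h with h | h
          · exact hqn h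
          · exact hdr h
      · -- leading coefficient argument
        set a := (qc n).natDegree with ha
        set b := r₀.natDegree with hb
        have ha0 : a ≠ 0 := fun h => hdq (by rw [eq_C_of_natDegree_eq_zero h]; simp)
        have hb0 : b ≠ 0 := fun h => hdr (by rw [eq_C_of_natDegree_eq_zero h]; simp)
        -- exact degree and leading coefficient of derivatives
        have hda : (derivative (qc n)).natDegree = a - 1 := by
          refine le_antisymm (natDegree_derivative_le _) ?_
          apply le_natDegree_of_ne_zero
          rw [coeff_derivative]
          have h1' : a - 1 + 1 = a := by omega
          rw [h1']
          apply mul_ne_zero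
          · exact leadingCoeff_ne_zero.mpr hqn
          · have : (1:ℝ) ≤ (a:ℝ) := by exact_mod_cast Nat.one_le_iff_ne_zero.mpr ha0
            linarith
        have hdb : (derivative r₀).natDegree = b - 1 := by
          refine le_antisymm (natDegree_derivative_le _) ?_
          apply le_natDegree_of_ne_zero
          rw [coeff_derivative]
          have h1' : b - 1 + 1 = b := by omega
          rw [h1']
          apply mul_ne_zero
          · exact leadingCoeff_ne_zero.mpr hr0
          · have : (1:ℝ) ≤ (b:ℝ) := by exact_mod_cast Nat.one_le_iff_ne_zero.mpr hb0
            linarith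
        have hlda : (derivative (qc n)).leadingCoeff = (a:ℝ) * (qc n).leadingCoeff := by
          have h1' : a - 1 + 1 = a := by omega
          have h2' : ((a - 1 : ℕ) : ℝ) + 1 = (a : ℝ) := by
            rw [Nat.cast_sub (Nat.one_le_iff_ne_zero.mpr ha0)]; ring
          rw [leadingCoeff, leadingCoeff, hda, coeff_derivative, h1', h2', ← ha]
          ring
        have hldb : (derivative r₀).leadingCoeff = (b:ℝ) * r₀.leadingCoeff := by
          have h1' : b - 1 + 1 = b := by omega
          have h2' : ((b - 1 : ℕ) : ℝ) + 1 = (b : ℝ) := by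
            rw [Nat.cast_sub (Nat.one_le_iff_ne_zero.mpr hb0)]; ring
          rw [leadingCoeff, leadingCoeff, hdb, coeff_derivative, h1', h2', ← hb]
          ring
        -- take coefficient (a-1) + b of hB
        have hcoeff := congrArg (fun p => p.coeff ((a-1) + b)) hB
        simp only [coeff_add, coeff_zero] at hcoeff
        have e1 : (derivative (qc n) * r₀).coeff ((a-1) + b)
            = (derivative (qc n)).leadingCoeff * r₀.leadingCoeff := by
          rw [← hda, hb]
          exact coeff_mul_degree_add_degree _ _
        have e2 : (C ((m:ℝ)+3) * (qc n * derivative r₀)).coeff ((a-1) + b)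
            = ((m:ℝ)+3) * ((qc n).leadingCoeff * (derivative r₀).leadingCoeff) := by
          rw [coeff_C_mul]
          congr 1
          have hidx : (a-1) + b = a + (b-1) := by omega
          rw [hidx, ← hdb, ha]
          exact coeff_mul_degree_add_degree _ _
        rw [e1, e2, hlda, hldb] at hcoeff
        have hlq : (qc n).leadingCoeff ≠ 0 := leadingCoeff_ne_zero.mpr hqn
        have hlr : r₀.leadingCoeff ≠ 0 := leadingCoeff_ne_zero.mpr hr0
        have hfac : (qc n).leadingCoeff * r₀.leadingCoeff * ((a:ℝ) + ((m:ℝ)+3) * (b:ℝ)) = 0 := by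
          linear_combination hcoeff
        rcases mul_eq_zero.mp hfac with h | h
        · exact (mul_ne_zero hlq hlr) h
        · have h1a : (1:ℝ) ≤ (a:ℝ) := by exact_mod_cast Nat.one_le_iff_ne_zero.mpr ha0
          have h0b : (0:ℝ) ≤ (b:ℝ) := Nat.cast_nonneg b
          have h0m : (0:ℝ) ≤ (m:ℝ) := Nat.cast_nonneg m
          nlinarith
  refine ⟨-(r₁.coeff 0), by rw [neg_neg]; exact hr1, hr0, ?_⟩
  intro x y
  show r₀.eval x + r₁.eval x * y = -(-(r₁.coeff 0)) * y
  rw [hr0, hr1]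
  simp
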